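/- Let p be a prime and f = a_0 + a_1 x + ... + a_n x^n ∈ ℤ[x] a primitive polynomial of degree n ≥ 1 such that (i) p does not divide a_n, (ii) v_p(a_0)/n < v_p(a_i)/(n-i) for each i = 1, ..., n-1 with a_i ≠ 0, and (iii) gcd(v_p(a_0), n) = 1. Then f is irreducible in ℤ[x]. -/

import Mathlib

open Polynomial

/-- The weighted valuation of the `i`-th coefficient: `n * v_p(g_i) + μ * i` in `ℕ∞`. -/
noncomputable def dumasW (p n μ : ℕ) (g : Polynomial ℤ) (i : ℕ) : ℕ∞ :=
  (n : ℕ∞) * emultiplicity (p : ℤ) (g.coeff i) + (μ : ℕ∞) * (i : ℕ∞)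

theorem dumas_sum_le {α : Type*} (p : ℤ) (s : Finset α) (F : α → ℤ) (c : ℕ∞)
    (h : ∀ x ∈ s, c ≤ emultiplicity p (F x)) :
    c ≤ emultiplicity p (∑ x ∈ s, F x) := by
  induction s using Finset.cons_induction with
  | empty => simp [emultiplicity_zero]
  | cons a s ha ih =>
    rw [Finset.sum_cons]
    refine le_trans ?_ min_le_emultiplicity_add
    exact le_min (h a (Finset.mem_cons_self ..)) (ih fun x hx => h x (Finset.mem_cons_of_mem hx))

theorem dumas_key_ge (p n μ : ℕ) (hp : Prime (p : ℤ)) (g h : Polynomial ℤ)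
    (j : ℕ) (e : ℕ∞)
    (hb : ∀ i k, i + k = j → e ≤ dumasW p n μ g i + dumasW p n μ h k) :
    e ≤ dumasW p n μ (g * h) j := by
  rw [dumasW, Polynomial.coeff_mul]
  have hterm : ∀ x ∈ Finset.HasAntidiagonal.antidiagonal j,
      e ≤ (n : ℕ∞) * emultiplicity (p : ℤ) (g.coeff x.1 * h.coeff x.2) + (μ : ℕ∞) * j := by
    intro x hx
    rw [Finset.HasAntidiagonal.mem_antidiagonal] at hx
    have h1 := hb x.1 x.2 hx
    rw [dumasW, dumasW] at h1
    rw [emultiplicity_mul hp]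
    refine le_trans h1 (le_of_eq ?_)
    rw [← hx]
    push_cast
    ring
  obtain ⟨x0, hx0, hinf⟩ := Finset.exists_mem_eq_inf (Finset.HasAntidiagonal.antidiagonal j)
    ⟨(0, j), by simp⟩ (fun x => emultiplicity (p : ℤ) (g.coeff x.1 * h.coeff x.2))
  have hle : emultiplicity (p : ℤ) (g.coeff x0.1 * h.coeff x0.2) ≤
      emultiplicity (p : ℤ) (∑ x ∈ Finset.HasAntidiagonal.antidiagonal j, g.coeff x.1 * h.coeff x.2) := by
    rw [← hinf]
    exact dumas_sum_le _ _ _ _ (fun x hx => Finset.inf_le hx)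
  calc e ≤ _ := hterm x0 hx0
  _ ≤ _ := add_le_add_left (mul_le_mul_right hle _) _

theorem dumas_key_eq (p n μ : ℕ) (hp : Prime (p : ℤ)) (hn0 : n ≠ 0) (g h : Polynomial ℤ)
    (mg mh : ℕ) (c d : ℕ∞) (hcne : c ≠ ⊤) (hdne : d ≠ ⊤)
    (hgc : dumasW p n μ g mg = c) (hhd : dumasW p n μ h mh = d)
    (hgmin : ∀ i, c ≤ dumasW p n μ g i) (hhmin : ∀ k, d ≤ dumasW p n μ h k)
    (hglt : ∀ i < mg, c < dumasW p n μ g i) (hhlt : ∀ k < mh, d < dumasW p n μ h k) :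
    dumasW p n μ (g * h) (mg + mh) = c + d := by
  set ν : ℤ → ℕ∞ := emultiplicity (p : ℤ) with hν
  -- the main term
  have hmain : (n : ℕ∞) * ν (g.coeff mg * h.coeff mh) + (μ : ℕ∞) * (mg + mh : ℕ) = c + d := by
    rw [hν, emultiplicity_mul hp, ← hgc, ← hhd, dumasW, dumasW]
    push_cast
    ring
  have hν0ne : ν (g.coeff mg * h.coeff mh) ≠ ⊤ := by
    intro htop
    rw [htop, ENat.mul_top (by exact_mod_cast hn0), top_add] at hmain
    rcases WithTop.add_eq_top.mp hmain.symm with h' | h'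
    · exact hcne h'
    · exact hdne h'
  -- other terms have strictly larger emultiplicity
  have hother : ∀ x ∈ (Finset.HasAntidiagonal.antidiagonal (mg + mh)).erase (mg, mh),
      ν (g.coeff mg * h.coeff mh) + 1 ≤ ν (g.coeff x.1 * h.coeff x.2) := by
    intro x hx
    obtain ⟨hne, hadd⟩ := Finset.mem_erase.mp hx
    rw [Finset.HasAntidiagonal.mem_antidiagonal] at hadd
    have hcase : x.1 < mg ∨ x.2 < mh := by
      by_contra hcon
      push_neg at hcon
      have h1 : x.1 = mg := by omega
      have h2 : x.2 = mh := by omega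
      exact hne (Prod.ext h1 h2)
    have hWsum : c + d + 1 ≤ dumasW p n μ g x.1 + dumasW p n μ h x.2 := by
      rcases hcase with hlt | hlt
      · have := (ENat.add_one_le_iff hcne).mpr (hglt x.1 hlt)
        calc c + d + 1 = (c + 1) + d := by ring
        _ ≤ _ := add_le_add this (hhmin x.2)
      · have := (ENat.add_one_le_iff hdne).mpr (hhlt x.2 hlt)
        calc c + d + 1 = c + (d + 1) := by ring
        _ ≤ _ := add_le_add (hgmin x.1) this
    have hWx : dumasW p n μ g x.1 + dumasW p n μ h x.2 =
        (n : ℕ∞) * ν (g.coeff x.1 * h.coeff x.2) + (μ : ℕ∞) * ((mg + mh : ℕ) : ℕ∞) := by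
      rw [hν, emultiplicity_mul hp, dumasW, dumasW, ← hadd]
      push_cast
      ring
    have hlt2 : (n : ℕ∞) * ν (g.coeff mg * h.coeff mh) + (μ : ℕ∞) * ((mg + mh : ℕ) : ℕ∞) <
        (n : ℕ∞) * ν (g.coeff x.1 * h.coeff x.2) + (μ : ℕ∞) * ((mg + mh : ℕ) : ℕ∞) := by
      rw [← hWx]
      calc (n : ℕ∞) * ν (g.coeff mg * h.coeff mh) + (μ : ℕ∞) * ((mg + mh : ℕ) : ℕ∞)
          = c + d := by exact_mod_cast hmain
      _ < c + d + 1 := by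
          refine (ENat.add_one_le_iff ?_).mp le_rfl
          exact fun htop => (WithTop.add_eq_top.mp htop).elim (absurd · hcne) (absurd · hdne)
      _ ≤ _ := hWsum
    have hlt3 : (n : ℕ∞) * ν (g.coeff mg * h.coeff mh) <
        (n : ℕ∞) * ν (g.coeff x.1 * h.coeff x.2) := by
      by_contra hcon
      push_neg at hcon
      exact absurd (add_le_add_left hcon _) (not_le.mpr hlt2)
    have hνlt : ν (g.coeff mg * h.coeff mh) < ν (g.coeff x.1 * h.coeff x.2) := by
      by_contra hcon
      push_neg at hcon
      exact absurd (mul_le_mul_right hcon (n : ℕ∞)) (not_le.mpr hlt3)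
    exact (ENat.add_one_le_iff hν0ne).mpr hνlt
  -- split the sum
  have hsplit : (g * h).coeff (mg + mh) = g.coeff mg * h.coeff mh +
      ∑ x ∈ (Finset.HasAntidiagonal.antidiagonal (mg + mh)).erase (mg, mh), g.coeff x.1 * h.coeff x.2 := by
    rw [Polynomial.coeff_mul]
    exact (Finset.add_sum_erase _ (fun x => g.coeff x.1 * h.coeff x.2) (a := (mg, mh)) (Finset.HasAntidiagonal.mem_antidiagonal.mpr rfl)).symm
  have hrest : ν (g.coeff mg * h.coeff mh) <
      ν (∑ x ∈ (Finset.HasAntidiagonal.antidiagonal (mg + mh)).erase (mg, mh), g.coeff x.1 * h.coeff x.2) := by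
    refine lt_of_lt_of_le ((ENat.add_one_le_iff hν0ne).mp le_rfl) ?_
    exact dumas_sum_le _ _ _ _ hother
  have hνtotal : ν ((g * h).coeff (mg + mh)) = ν (g.coeff mg * h.coeff mh) := by
    rw [hsplit, add_comm]
    exact emultiplicity_add_of_gt hrest
  rw [dumasW, ← hν, hνtotal]
  exact_mod_cast hmain

/-- Dumas irreducibility criterion specialized to ℤ. -/
theorem dumas_irreducible (p : ℕ) (hp : p.Prime) (f : Polynomial ℤ) (n : ℕ)
    (hn : f.natDegree = n) (hn1 : 1 ≤ n) (hprim : f.IsPrimitive)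
    (h1 : ¬ (p : ℤ) ∣ f.coeff n)
    (h2 : ∀ i, 1 ≤ i → i < n → f.coeff i ≠ 0 →
      padicValInt p (f.coeff 0) * (n - i) < padicValInt p (f.coeff i) * n)
    (h3 : Nat.gcd (padicValInt p (f.coeff 0)) n = 1) :
    Irreducible f := by
  haveI : Fact p.Prime := ⟨hp⟩
  have hpz : Prime (p : ℤ) := Nat.prime_iff_prime_int.mp hp
  have hfn0 : f.coeff n ≠ 0 := fun h => h1 (h ▸ dvd_zero _)
  have hf0 : f ≠ 0 := fun h => hfn0 (by simp [h])
  have hn0 : n ≠ 0 := by omega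
  set μ := padicValInt p (f.coeff 0) with hμdef
  have hcast : ∀ z : ℤ, z ≠ 0 → (padicValInt p z : ℕ∞) = emultiplicity (p : ℤ) z := by
    intro z hz
    rw [padicValInt, padicValNat_eq_emultiplicity (Int.natAbs_ne_zero.mpr hz),
      Int.emultiplicity_natAbs]
  refine ⟨not_isUnit_of_natDegree_pos f (by omega), ?_⟩
  intro g h hgh
  by_contra hcon
  push_neg at hcon
  obtain ⟨hgu, hhu⟩ := hcon
  have hg0 : g ≠ 0 := by rintro rfl; rw [zero_mul] at hgh; exact hf0 hgh
  have hh0 : h ≠ 0 := by rintro rfl; rw [mul_zero] at hgh; exact hf0 hgh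
  set r := g.natDegree with hr
  set s := h.natDegree with hs
  have hrs : r + s = n := by rw [hr, hs, ← natDegree_mul hg0 hh0, ← hgh, hn]
  have hdegpos : ∀ a b : Polynomial ℤ, f = a * b → ¬IsUnit a → 1 ≤ a.natDegree := by
    intro a b hab hau
    rcases Nat.eq_zero_or_pos a.natDegree with h0 | h0
    · exfalso
      apply hau
      have ha : a = C (a.coeff 0) := Polynomial.eq_C_of_natDegree_eq_zero h0
      rw [ha]
      exact Polynomial.isUnit_C.mpr (hprim (a.coeff 0) ⟨b, by rw [← ha]; exact hab⟩)
    · exact h0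
  have hr1 : 1 ≤ r := hdegpos g h hgh hgu
  have hs1 : 1 ≤ s := hdegpos h g (by rw [hgh, mul_comm]) hhu
  have ha0 : f.coeff 0 ≠ 0 := by
    intro h0
    have hμ0 : μ = 0 := by rw [hμdef, h0, padicValInt.zero]
    rw [hμ0, Nat.gcd_zero_left] at h3
    omega
  have hlead : f.coeff n = g.coeff r * h.coeff s := by
    rw [← hn]
    show f.leadingCoeff = _
    rw [hgh, Polynomial.leadingCoeff_mul]
    rfl
  have hpg : ¬ (p : ℤ) ∣ g.coeff r := fun hd => h1 (hlead ▸ hd.mul_right _)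
  have hph : ¬ (p : ℤ) ∣ h.coeff s := fun hd => h1 (hlead ▸ hd.mul_left _)
  have hWtop : ∀ (q : Polynomial ℤ) (i : ℕ), q.natDegree < i → dumasW p n μ q i = ⊤ := by
    intro q i hi
    rw [dumasW, Polynomial.coeff_eq_zero_of_natDegree_lt hi, emultiplicity_zero,
      ENat.mul_top (by exact_mod_cast hn0), top_add]
  -- minima of the weight functions for g and h
  set Vg := (Finset.range (r + 1)).inf (dumasW p n μ g) with hVgdef
  set Vh := (Finset.range (s + 1)).inf (dumasW p n μ h) with hVhdef
  have hVgle : ∀ i, Vg ≤ dumasW p n μ g i := by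
    intro i
    rcases le_or_gt i r with hi | hi
    · exact Finset.inf_le (Finset.mem_range.mpr (by omega))
    · rw [hWtop g i hi]; exact le_top
  have hVhle : ∀ k, Vh ≤ dumasW p n μ h k := by
    intro k
    rcases le_or_gt k s with hk | hk
    · exact Finset.inf_le (Finset.mem_range.mpr (by omega))
    · rw [hWtop h k hk]; exact le_top
  have hexg : ∃ i, dumasW p n μ g i = Vg := by
    obtain ⟨i, _, hieq⟩ := Finset.exists_mem_eq_inf (Finset.range (r + 1))
      ⟨0, by simp⟩ (dumasW p n μ g)
    exact ⟨i, hieq.symm⟩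
  have hexh : ∃ k, dumasW p n μ h k = Vh := by
    obtain ⟨k, _, hkeq⟩ := Finset.exists_mem_eq_inf (Finset.range (s + 1))
      ⟨0, by simp⟩ (dumasW p n μ h)
    exact ⟨k, hkeq.symm⟩
  set mg := Nat.find hexg with hmgdef
  set mh := Nat.find hexh with hmhdef
  have hmgeq : dumasW p n μ g mg = Vg := Nat.find_spec hexg
  have hmheq : dumasW p n μ h mh = Vh := Nat.find_spec hexh
  have hmglt : ∀ i < mg, Vg < dumasW p n μ g i := fun i hi =>
    lt_of_le_of_ne (hVgle i) (fun heq => Nat.find_min hexg hi heq.symm)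
  have hmhlt : ∀ k < mh, Vh < dumasW p n μ h k := fun k hk =>
    lt_of_le_of_ne (hVhle k) (fun heq => Nat.find_min hexh hk heq.symm)
  have hWgr : dumasW p n μ g r = ((μ * r : ℕ) : ℕ∞) := by
    rw [dumasW, emultiplicity_eq_zero.mpr hpg, mul_zero, zero_add]
    push_cast; ring
  have hWhs : dumasW p n μ h s = ((μ * s : ℕ) : ℕ∞) := by
    rw [dumasW, emultiplicity_eq_zero.mpr hph, mul_zero, zero_add]
    push_cast; ring
  have hVgne : Vg ≠ ⊤ := by
    intro htop
    have h' := hVgle r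
    rw [htop, hWgr, top_le_iff] at h'
    exact (WithTop.natCast_ne_top _) h'
  have hVhne : Vh ≠ ⊤ := by
    intro htop
    have h' := hVhle s
    rw [htop, hWhs, top_le_iff] at h'
    exact (WithTop.natCast_ne_top _) h'
  -- the weight of f is bounded below by n * μ
  have hν0 : (μ : ℕ∞) = emultiplicity (p : ℤ) (f.coeff 0) := hcast _ ha0
  have hWf0 : dumasW p n μ f 0 = ((n * μ : ℕ) : ℕ∞) := by
    rw [dumasW, ← hν0]
    push_cast; ring
  have hWflb : ∀ j, ((n * μ : ℕ) : ℕ∞) ≤ dumasW p n μ f j := by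
    intro j
    rcases eq_or_ne (f.coeff j) 0 with hj0 | hj0
    · rw [dumasW, hj0, emultiplicity_zero, ENat.mul_top (by exact_mod_cast hn0), top_add]
      exact le_top
    · rw [dumasW, ← hcast _ hj0]
      have hkey : n * μ ≤ n * padicValInt p (f.coeff j) + μ * j := by
        rcases lt_trichotomy j n with hj | hj | hj
        · rcases Nat.eq_zero_or_pos j with rfl | hj1
          · rw [← hμdef, mul_zero, add_zero]
          · have hlt := h2 j hj1 hj hj0
            have e : μ * (n - j) + μ * j = μ * n := by
              rw [← Nat.mul_add, Nat.sub_add_cancel hj.le]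
            calc n * μ = μ * (n - j) + μ * j := by rw [e, mul_comm]
            _ ≤ padicValInt p (f.coeff j) * n + μ * j := by omega
            _ = n * padicValInt p (f.coeff j) + μ * j := by rw [mul_comm]
        · rw [hj]
          calc n * μ = μ * n := mul_comm _ _
          _ ≤ _ := Nat.le_add_left _ _
        · exfalso
          exact hj0 (Polynomial.coeff_eq_zero_of_natDegree_lt (by omega))
      calc ((n * μ : ℕ) : ℕ∞) ≤ ((n * padicValInt p (f.coeff j) + μ * j : ℕ) : ℕ∞) :=
        Nat.cast_le.mpr hkey
      _ = _ := by push_cast; ring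
  -- key inequalities
  have hub : Vg + Vh ≤ ((n * μ : ℕ) : ℕ∞) := by
    rw [← hWf0, hgh]
    exact dumas_key_ge p n μ hpz g h 0 _ (fun i k _ => add_le_add (hVgle i) (hVhle k))
  have hkeyeq : dumasW p n μ f (mg + mh) = Vg + Vh := by
    rw [hgh]
    exact dumas_key_eq p n μ hpz hn0 g h mg mh Vg Vh hVgne hVhne hmgeq hmheq hVgle hVhle hmglt hmhlt
  have hlb : ((n * μ : ℕ) : ℕ∞) ≤ Vg + Vh := by
    rw [← hkeyeq]; exact hWflb _
  have hVsum : Vg + Vh = ((n * μ : ℕ) : ℕ∞) := le_antisymm hub hlb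
  have hsumne : Vg + Vh ≠ ⊤ := fun htop =>
    (WithTop.add_eq_top.mp htop).elim (fun c => hVgne c) (fun c => hVhne c)
  -- the minimum of both g and h is attained at index 0
  have hm0 : mg + mh = 0 := by
    by_contra hm
    have hcase : 0 < mg ∨ 0 < mh := by omega
    have hge : Vg + Vh + 1 ≤ dumasW p n μ f 0 := by
      rw [hgh]
      refine dumas_key_ge p n μ hpz g h 0 _ ?_
      intro i k hik
      have hi0 : i = 0 := by omega
      have hk0 : k = 0 := by omega
      subst hi0; subst hk0
      rcases hcase with hc | hc
      · calc Vg + Vh + 1 = (Vg + 1) + Vh := by ring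
        _ ≤ _ := add_le_add ((ENat.add_one_le_iff hVgne).mpr (hmglt 0 hc)) (hVhle 0)
      · calc Vg + Vh + 1 = Vg + (Vh + 1) := by ring
        _ ≤ _ := add_le_add (hVgle 0) ((ENat.add_one_le_iff hVhne).mpr (hmhlt 0 hc))
    rw [hWf0, ← hVsum] at hge
    exact lt_irrefl _ ((ENat.add_one_le_iff hsumne).mp hge)
  have hmg0 : mg = 0 := by omega
  have hgW0 : dumasW p n μ g 0 = Vg := hmg0 ▸ hmgeq
  -- lift everything to ℕ
  set vg := Vg.toNat with hvgdef
  set vh := Vh.toNat with hvhdef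
  have hvg : (vg : ℕ∞) = Vg := ENat.coe_toNat hVgne
  have hvh : (vh : ℕ∞) = Vh := ENat.coe_toNat hVhne
  have hsumnat : vg + vh = n * μ := by
    have : ((vg + vh : ℕ) : ℕ∞) = ((n * μ : ℕ) : ℕ∞) := by
      push_cast
      rw [hvg, hvh, hVsum]
      push_cast; ring
    exact_mod_cast this
  have hvgle : vg ≤ μ * r := by
    have := hVgle r
    rw [hWgr, ← hvg, Nat.cast_le] at this
    exact this
  have hvhle : vh ≤ μ * s := by
    have := hVhle s
    rw [hWhs, ← hvh, Nat.cast_le] at this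
    exact this
  have hvgeq : vg = μ * r := by
    have hmn : μ * r + μ * s = n * μ := by rw [← Nat.mul_add, hrs]; ring
    omega
  -- extract the valuation of g.coeff 0
  have hWg0' : (n : ℕ∞) * emultiplicity (p : ℤ) (g.coeff 0) = (vg : ℕ∞) := by
    have h' := hgW0
    rw [dumasW, ← hvg] at h'
    simpa using h'
  have hνg0ne : emultiplicity (p : ℤ) (g.coeff 0) ≠ ⊤ := by
    intro htop
    rw [htop, ENat.mul_top (by exact_mod_cast hn0)] at hWg0'
    exact (WithTop.natCast_ne_top vg) hWg0'.symm
  set w := (emultiplicity (p : ℤ) (g.coeff 0)).toNat with hwdef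
  have hw : (w : ℕ∞) = emultiplicity (p : ℤ) (g.coeff 0) := ENat.coe_toNat hνg0ne
  have hnw : n * w = vg := by
    have : ((n * w : ℕ) : ℕ∞) = (vg : ℕ∞) := by
      push_cast
      rw [hw, hWg0']
    exact_mod_cast this
  -- conclude
  have hdvd : n ∣ μ * r := ⟨w, by rw [← hvgeq, ← hnw]⟩
  have hcop : Nat.Coprime n μ := Nat.Coprime.symm h3
  have hnr : n ∣ r := hcop.dvd_of_dvd_mul_left hdvd
  have := Nat.le_of_dvd (by omega) hnr
  omega
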